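/- Mixed-policy transition and reward interpolation: if P, P' are stochastic matrices and f_λ, f'_λ reward vectors, then for δ ∈ [0,1], P^δ := P + δ(P' - P) is a stochastic matrix, and with ξ^δ := ξ of the interpolated system, the performance difference satisfies ξ^δ - ξ = δ · μ (I - α P^δ)^{-1} [ (1-α)(f'_λ - f_λ) + α (P' - P) u_λ ] + β(η^δ - λ)^2 - β(η - λ)^2, where u_λ = (1-α)(I - αP)^{-1} f_λ. -/
import Mathlib


open Matrix

lemma stoch_isUnit {n : ℕ} (P : Matrix (Fin n) (Fin n) ℝ)
    (hPnn : ∀ i j, 0 ≤ P i j) (hProw : ∀ i, ∑ j, P i j = 1)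
    {α : ℝ} (hα0 : 0 ≤ α) (hα1 : α < 1) : IsUnit (1 - α • P) := by
  rw [← Matrix.mulVec_injective_iff_isUnit]
  intro x y hxy
  set v := x - y with hvdef
  have hv : (1 - α • P) *ᵥ v = 0 := by
    rw [hvdef, Matrix.mulVec_sub, hxy, sub_self]
  have hv' : ∀ j, v j = α * (P *ᵥ v) j := by
    intro j
    have := congrFun hv j
    simp [Matrix.sub_mulVec, Matrix.smul_mulVec, sub_eq_zero] at this
    simpa using this
  have hvz : ∀ i, v i = 0 := by
    intro i
    obtain ⟨i0, -, hi0⟩ :=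
      Finset.exists_max_image Finset.univ (fun j => |v j|) ⟨i, Finset.mem_univ i⟩
    have h0 : |v i0| ≤ α * |v i0| := by
      calc |v i0| = α * |∑ j, P i0 j * v j| := by
            rw [hv' i0, abs_mul, abs_of_nonneg hα0]; rfl
        _ ≤ α * ∑ j, P i0 j * |v i0| := by
            apply mul_le_mul_of_nonneg_left _ hα0
            calc |∑ j, P i0 j * v j| ≤ ∑ j, |P i0 j * v j| := Finset.abs_sum_le_sum_abs _ _
              _ ≤ ∑ j, P i0 j * |v i0| := by
                  apply Finset.sum_le_sum
                  intro j _
                  rw [abs_mul, abs_of_nonneg (hPnn i0 j)]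
                  exact mul_le_mul_of_nonneg_left (hi0 j (Finset.mem_univ j)) (hPnn i0 j)
        _ = α * |v i0| := by rw [← Finset.sum_mul, hProw i0, one_mul]
    have h00 : |v i0| = 0 := by nlinarith [abs_nonneg (v i0)]
    have hle := hi0 i (Finset.mem_univ i)
    have : |v i| = 0 := le_antisymm (by linarith) (abs_nonneg _)
    exact abs_eq_zero.mp this
  have : v = 0 := funext hvz
  rw [hvdef, sub_eq_zero] at this
  exact this

/-- Mixed-policy interpolation: `P^δ = P + δ(P' - P)` is stochastic, and the
performance difference of the interpolated system satisfies
`ξ^δ - ξ = δ μ (I - αP^δ)⁻¹[(1-α)(f'_λ - f_λ) + α(P'-P)u_λ] + β(η^δ-λ)² - β(η-λ)²`. -/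
theorem stmt_17 {n : ℕ} (P P' : Matrix (Fin n) (Fin n) ℝ)
    (hPnn : ∀ i j, 0 ≤ P i j) (hProw : ∀ i, ∑ j, P i j = 1)
    (hP'nn : ∀ i j, 0 ≤ P' i j) (hP'row : ∀ i, ∑ j, P' i j = 1)
    (μ : Fin n → ℝ) (hμnn : ∀ i, 0 ≤ μ i) (hμsum : ∑ i, μ i = 1)
    (α β : ℝ) (hα0 : 0 < α) (hα1 : α < 1) (hβ : 0 < β)
    (δ : ℝ) (hδ0 : 0 ≤ δ) (hδ1 : δ ≤ 1)
    (r r' : Fin n → ℝ) (l : ℝ) (fl fl' : Fin n → ℝ)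
    (Pδ : Matrix (Fin n) (Fin n) ℝ) (hPδ : Pδ = P + δ • (P' - P))
    (rδ : Fin n → ℝ) (hrδ : rδ = r + δ • (r' - r))
    (flδ : Fin n → ℝ) (hflδ : flδ = fl + δ • (fl' - fl))
    (ul : Fin n → ℝ) (hul : ul = (1 - α) • ((1 - α • P)⁻¹ *ᵥ fl))
    (η ηδ ξ ξδ : ℝ)
    (hη : η = (1 - α) * ((μ ᵥ* (1 - α • P)⁻¹) ⬝ᵥ r))
    (hηδ : ηδ = (1 - α) * ((μ ᵥ* (1 - α • Pδ)⁻¹) ⬝ᵥ rδ))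
    (hξ : ξ = (1 - α) * ((μ ᵥ* (1 - α • P)⁻¹) ⬝ᵥ fl) + β * (η - l) ^ 2)
    (hξδ : ξδ = (1 - α) * ((μ ᵥ* (1 - α • Pδ)⁻¹) ⬝ᵥ flδ) + β * (ηδ - l) ^ 2) :
    (∀ i j, 0 ≤ Pδ i j) ∧ (∀ i, ∑ j, Pδ i j = 1) ∧
    ξδ - ξ =
      δ * (μ ⬝ᵥ ((1 - α • Pδ)⁻¹ *ᵥ ((1 - α) • (fl' - fl) + α • ((P' - P) *ᵥ ul))))
        + β * (ηδ - l) ^ 2 - β * (η - l) ^ 2 := by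
  have hPδnn : ∀ i j, 0 ≤ Pδ i j := by
    intro i j
    rw [hPδ]
    simp only [Matrix.add_apply, Matrix.smul_apply, Matrix.sub_apply, smul_eq_mul]
    nlinarith [hPnn i j, hP'nn i j]
  have hPδrow : ∀ i, ∑ j, Pδ i j = 1 := by
    intro i
    rw [hPδ]
    simp only [Matrix.add_apply, Matrix.smul_apply, Matrix.sub_apply, smul_eq_mul]
    rw [Finset.sum_add_distrib, ← Finset.mul_sum, Finset.sum_sub_distrib, hProw i, hP'row i]
    ring
  refine ⟨hPδnn, hPδrow, ?_⟩
  have hAu : IsUnit ((1 : Matrix (Fin n) (Fin n) ℝ) - α • P) :=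
    stoch_isUnit P hPnn hProw hα0.le hα1
  have hAδu : IsUnit ((1 : Matrix (Fin n) (Fin n) ℝ) - α • Pδ) :=
    stoch_isUnit Pδ hPδnn hPδrow hα0.le hα1
  set A := (1 : Matrix (Fin n) (Fin n) ℝ) - α • P with hA
  set Aδ := (1 : Matrix (Fin n) (Fin n) ℝ) - α • Pδ with hAδ
  have hAdet : IsUnit A.det := (Matrix.isUnit_iff_isUnit_det A).mp hAu
  have hAδdet : IsUnit Aδ.det := (Matrix.isUnit_iff_isUnit_det Aδ).mp hAδu
  have hAδA : Aδ = A - (δ * α) • (P' - P) := by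
    rw [hAδ, hA, hPδ]
    ext i j
    simp only [Matrix.sub_apply, Matrix.smul_apply, Matrix.add_apply, smul_eq_mul]
    ring
  have hAδinv : ∀ v : Fin n → ℝ, Aδ *ᵥ (Aδ⁻¹ *ᵥ v) = v := by
    intro v
    rw [Matrix.mulVec_mulVec, Matrix.mul_nonsing_inv Aδ hAδdet, Matrix.one_mulVec]
  have hAw : A *ᵥ (A⁻¹ *ᵥ fl) = fl := by
    rw [Matrix.mulVec_mulVec, Matrix.mul_nonsing_inv A hAdet, Matrix.one_mulVec]
  have hvec : (1 - α) • (Aδ⁻¹ *ᵥ flδ) =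
      (1 - α) • (A⁻¹ *ᵥ fl) +
        δ • (Aδ⁻¹ *ᵥ ((1 - α) • (fl' - fl) + α • ((P' - P) *ᵥ ul))) := by
    apply Matrix.mulVec_injective_iff_isUnit.mpr hAδu
    show Aδ *ᵥ _ = Aδ *ᵥ _
    rw [Matrix.mulVec_smul, Matrix.mulVec_add, Matrix.mulVec_smul, Matrix.mulVec_smul,
      hAδinv, hAδinv]
    conv_lhs => rw [hflδ]
    conv_rhs => rw [hAδA, Matrix.sub_mulVec, hAw, Matrix.smul_mulVec, hul,
      Matrix.mulVec_smul]
    module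
  have hdot := congrArg (fun v => μ ⬝ᵥ v) hvec
  simp only [dotProduct_smul, dotProduct_add, smul_eq_mul] at hdot
  rw [hξδ, hξ, ← Matrix.dotProduct_mulVec, ← Matrix.dotProduct_mulVec]
  linarith [hdot]
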